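/- arXiv:1602.08466 — 6 statements merged into one kernel-verified Lean document; each statement's English description precedes it below -/
import Mathlib

section
/- For each cell i, the load coupling function f_i(ν) = Σ_{j ∈ J_i} r_{ij} / log(1 + p_i g_{ij} / (Σ_{k≠i} p_k g_{kj} ν_k + σ²)) is a concave function of ν on the nonnegative orthant. -/
open Real Set

/-- `log(1+u) ≥ u/(1+u)` for `u > -1`. -/
lemma log_ge_div (u : ℝ) (hu : -1 < u) : u / (1 + u) ≤ Real.log (1 + u) := by
  have h1 : (0:ℝ) < 1 + u := by linarith
  have := Real.log_le_sub_one_of_pos (x := (1+u)⁻¹) (by positivity)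
  rw [Real.log_inv] at this
  have h2 : (1+u)⁻¹ - 1 = -(u/(1+u)) := by field_simp; ring
  rw [h2] at this
  linarith

/-- Key scalar inequality: `2u ≤ (2+u) log(1+u)` for `u ≥ 0`. -/
lemma key_ineq (u : ℝ) (hu : 0 ≤ u) : 2 * u ≤ (2 + u) * Real.log (1 + u) := by
  set F : ℝ → ℝ := fun x => (2 + x) * Real.log (1 + x) - 2 * x with hF
  have hd : ∀ x : ℝ, 0 < x → HasDerivAt F (Real.log (1 + x) - x / (1 + x)) x := by
    intro x hx
    have h1 : (0:ℝ) < 1 + x := by linarith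
    have hlog : HasDerivAt (fun y : ℝ => Real.log (1 + y)) (1 / (1 + x)) x := by
      have := (Real.hasDerivAt_log h1.ne').comp x
        ((hasDerivAt_const x (1:ℝ)).add (hasDerivAt_id x))
      simpa [Function.comp_def] using this
    have := (((hasDerivAt_const x (2:ℝ)).fun_add (hasDerivAt_id x)).fun_mul hlog).fun_sub
      ((hasDerivAt_id x).const_mul 2)
    refine this.congr_deriv ?_
    simp only [id_eq]
    field_simp
    ring
  have hmono : MonotoneOn F (Set.Ici (0:ℝ)) := by
    apply monotoneOn_of_deriv_nonneg (convex_Ici 0)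
    · apply ContinuousOn.sub
      · exact (continuousOn_const.add continuousOn_id).mul
          ((continuousOn_const.add continuousOn_id).log (by
            intro x hx; simp only [Set.mem_Ici] at hx
            exact (by linarith : (0:ℝ) < 1 + x).ne'))
      · exact continuousOn_const.mul continuousOn_id
    · intro x hx
      rw [interior_Ici] at hx
      exact (hd x hx).differentiableAt.differentiableWithinAt
    · intro x hx
      rw [interior_Ici] at hx
      rw [(hd x hx).deriv]
      have := log_ge_div x (lt_trans (by norm_num) hx)
      linarith
  rcases eq_or_lt_of_le hu with h | h
  · simp [← h]
  · have := hmono (Set.self_mem_Ici) (Set.mem_Ici.2 hu) hu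
    simp only [hF] at this
    simp at this ⊢
    nlinarith [this]

lemma inv_log_concave (c : ℝ) (hc : 0 < c) :
    ConcaveOn ℝ (Set.Ioi (0:ℝ)) (fun t => (Real.log (1 + c / t))⁻¹) := by
  set L : ℝ → ℝ := fun t => Real.log (1 + c / t) with hLdef
  set f : ℝ → ℝ := fun t => (L t)⁻¹ with hfdef
  have hL : ∀ t : ℝ, 0 < t → HasDerivAt L (-c / (t * (t + c))) t := by
    intro t ht
    have h1 : (0:ℝ) < 1 + c / t := by positivity
    have hinner : HasDerivAt (fun t : ℝ => 1 + c / t) (c * -(t ^ 2)⁻¹) t := by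
      simpa [div_eq_mul_inv] using
        ((hasDerivAt_inv ht.ne').const_mul c).const_add 1
    have := hinner.log h1.ne'
    convert this using 1
    field_simp
  have hLpos : ∀ t : ℝ, 0 < t → 0 < L t := by
    intro t ht
    exact Real.log_pos (by nlinarith [div_pos hc ht])
  set φ : ℝ → ℝ := fun t => c * (t * (t + c))⁻¹ * ((L t) ^ 2)⁻¹ with hφdef
  have hf : ∀ t : ℝ, 0 < t → HasDerivAt f (φ t) t := by
    intro t ht
    have := (hL t ht).fun_inv (hLpos t ht).ne'
    refine this.congr_deriv ?_
    have hD : (0:ℝ) < t * (t + c) := by positivity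
    simp [hφdef, div_eq_mul_inv, mul_inv, mul_assoc]
  -- derivative of φ
  have hφ : ∀ t : ℝ, 0 < t →
      HasDerivAt φ (c * (-(t + c + t) / (t * (t + c)) ^ 2) * ((L t) ^ 2)⁻¹ +
        c * (t * (t + c))⁻¹ *
          (-(2 * L t ^ 1 * (-c / (t * (t + c)))) / ((L t) ^ 2) ^ 2)) t := by
    intro t ht
    have hD : (0:ℝ) < t * (t + c) := by positivity
    have hA : HasDerivAt (fun t : ℝ => t * (t + c)) (t + c + t) t := by
      simpa using (hasDerivAt_id t).fun_mul ((hasDerivAt_id t).add_const c)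
    have hAinv : HasDerivAt (fun t : ℝ => (t * (t + c))⁻¹)
        (-(t + c + t) / (t * (t + c)) ^ 2) t := hA.inv hD.ne'
    have hL2 : HasDerivAt (fun t : ℝ => (L t) ^ 2)
        (2 * L t ^ 1 * (-c / (t * (t + c)))) t := (hL t ht).pow 2
    have hB : HasDerivAt (fun t : ℝ => ((L t) ^ 2)⁻¹)
        (-(2 * L t ^ 1 * (-c / (t * (t + c)))) / ((L t) ^ 2) ^ 2) t :=
      hL2.inv (pow_ne_zero 2 (hLpos t ht).ne')
    exact (hAinv.const_mul c).mul hB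
  apply concaveOn_of_deriv2_nonpos' (convex_Ioi 0)
  · intro t ht
    exact (hf t ht).differentiableAt.differentiableWithinAt
  · intro t ht
    have heq : deriv f =ᶠ[nhds t] φ := by
      filter_upwards [IsOpen.mem_nhds isOpen_Ioi ht] with x hx
      exact (hf x hx).deriv
    exact ((hφ t ht).differentiableAt.congr_of_eventuallyEq heq).differentiableWithinAt
  · intro t ht
    have ht' : (0:ℝ) < t := ht
    have heq : deriv f =ᶠ[nhds t] φ := by
      filter_upwards [IsOpen.mem_nhds isOpen_Ioi ht] with x hx
      exact (hf x hx).deriv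
    have h2 : deriv^[2] f t = deriv φ t := by
      simp only [Function.iterate_succ, Function.iterate_zero, Function.comp_apply, id]
      exact heq.deriv_eq
    rw [h2, (hφ t ht').deriv]
    -- now show the explicit expression is ≤ 0
    have hD : (0:ℝ) < t * (t + c) := by positivity
    have hLp := hLpos t ht'
    have hkey : 2 * c ≤ (2 * t + c) * L t := by
      have h0 := key_ineq (c / t) (by positivity)
      have h2 : 2 * (c / t) * t ≤ (2 + c / t) * Real.log (1 + c / t) * t :=
        mul_le_mul_of_nonneg_right h0 ht'.le
      calc 2 * c = 2 * (c / t) * t := by field_simp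
        _ ≤ (2 + c / t) * Real.log (1 + c / t) * t := h2
        _ = (2 * t + c) * L t := by rw [hLdef]; field_simp
    have hrw : c * (-(t + c + t) / (t * (t + c)) ^ 2) * ((L t) ^ 2)⁻¹ +
        c * (t * (t + c))⁻¹ *
          (-(2 * L t ^ 1 * (-c / (t * (t + c)))) / ((L t) ^ 2) ^ 2) =
        c / ((t * (t + c)) ^ 2 * (L t) ^ 3) * (2 * c - (2 * t + c) * L t) := by
      field_simp
      ring
    rw [hrw]
    apply mul_nonpos_of_nonneg_of_nonpos
    · positivity
    · linarith

lemma concaveOn_finset_sum {ι : Type} {E : Type*} [AddCommGroup E] [Module ℝ E]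
    {s : Set E} (hs : Convex ℝ s) (t : Finset ι) (f : ι → E → ℝ)
    (h : ∀ j ∈ t, ConcaveOn ℝ s (f j)) :
    ConcaveOn ℝ s (fun x => ∑ j ∈ t, f j x) := by
  classical
  induction t using Finset.induction_on with
  | empty => simpa using concaveOn_const 0 hs
  | insert _ _ hj ih =>
    simp only [Finset.sum_insert hj]
    exact (h _ (Finset.mem_insert_self _ _)).add
      (ih fun j hjt => h j (Finset.mem_insert_of_mem hjt))

lemma concave_comp_affine {n : ℕ} (c σ2 : ℝ) (hc : 0 < c) (hσ : 0 < σ2)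
    (a : Fin n → ℝ) (ha : ∀ k, 0 ≤ a k) (s : Finset (Fin n)) :
    ConcaveOn ℝ (Set.Ici (0 : Fin n → ℝ))
      (fun ν => (Real.log (1 + c / (∑ k ∈ s, a k * ν k + σ2)))⁻¹) := by
  have hbase := inv_log_concave c hc
  have hmem : ∀ x : Fin n → ℝ, x ∈ Set.Ici (0 : Fin n → ℝ) →
      (∑ k ∈ s, a k * x k + σ2) ∈ Set.Ioi (0:ℝ) := by
    intro x hx
    have hx' : ∀ k, 0 ≤ x k := fun k => hx k
    have : 0 ≤ ∑ k ∈ s, a k * x k :=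
      Finset.sum_nonneg fun k _ => mul_nonneg (ha k) (hx' k)
    simp only [Set.mem_Ioi]
    linarith
  refine ⟨convex_Ici _, ?_⟩
  intro x hx y hy α β hα hβ hαβ
  have haff : (∑ k ∈ s, a k * (α • x + β • y) k + σ2) =
      α • (∑ k ∈ s, a k * x k + σ2) + β • (∑ k ∈ s, a k * y k + σ2) := by
    simp only [Pi.add_apply, Pi.smul_apply, smul_eq_mul, Finset.mul_sum,
      ← Finset.sum_add_distrib]
    rw [Finset.sum_congr rfl (fun k _ => by ring :
      ∀ k ∈ s, a k * (α * x k + β * y k) = α * (a k * x k) + β * (a k * y k))]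
    rw [Finset.sum_add_distrib, ← Finset.mul_sum, ← Finset.mul_sum]
    linear_combination (-σ2) * hαβ
  have := hbase.2 (hmem x hx) (hmem y hy) hα hβ hαβ
  simp only [haff]
  exact this

set_option maxHeartbeats 1000000 in
/-- The load coupling function `f_i` is concave in the load vector on the
nonnegative orthant. -/
theorem load_coupling_concave
    (n : ℕ) (U : Type) (i : Fin n) (J : Finset U)
    (r : U → ℝ) (p : Fin n → ℝ) (g : Fin n → U → ℝ) (σ2 : ℝ)
    (hr : ∀ j ∈ J, 0 < r j)
    (hp : ∀ k, 0 < p k)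
    (hg : ∀ k j, 0 ≤ g k j)
    (hgi : ∀ j ∈ J, 0 < g i j)
    (hσ : 0 < σ2) :
    ConcaveOn ℝ (Set.Ici (0 : Fin n → ℝ))
      (fun ν : Fin n → ℝ =>
        ∑ j ∈ J, r j /
          Real.log (1 + p i * g i j /
            (∑ k ∈ Finset.univ.erase i, p k * g k j * ν k + σ2))) := by
  refine concaveOn_finset_sum (E := Fin n → ℝ) (convex_Ici 0) J _ fun j hj => ?_
  have hc : 0 < p i * g i j := mul_pos (hp i) (hgi j hj)
  have h := (concave_comp_affine (p i * g i j) σ2 hc hσ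
    (fun k => p k * g k j) (fun k => mul_nonneg (hp k).le (hg k j))
    (Finset.univ.erase i)).smul (hr j hj).le
  have heq : (fun ν : Fin n → ℝ => r j /
      Real.log (1 + p i * g i j /
        (∑ k ∈ Finset.univ.erase i, p k * g k j * ν k + σ2))) =
      (fun ν : Fin n → ℝ => r j • (Real.log (1 + p i * g i j /
        (∑ k ∈ Finset.univ.erase i, p k * g k j * ν k + σ2)))⁻¹) := by
    funext ν
    rw [smul_eq_mul, div_eq_mul_inv]
  rw [heq]
  exact h
end

section
/- Consider a single cell serving one user with demand r > 0, gain g > 0, and fixed interference-plus-noise I > 0, and let p(ν) = (I/g)(e^{r/ν} − 1) be the unique power achieving load ν, i.e., r/log(1 + p(ν) g / I) = ν. Then the transmission energy E(ν) = ν · p(ν) is strictly decreasing in ν on (0, 1]; in particular, if 0 < ν' < ν ≤ 1 then ν'·p(ν') > ν·p(ν). -/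
/-- `(x-1)e^x + 1 > 0` for `x > 0`. -/
lemma aux_F_pos {x : ℝ} (hx : 0 < x) : 0 < (x - 1) * Real.exp x + 1 := by
  set F : ℝ → ℝ := fun y => (y - 1) * Real.exp y + 1 with hF
  have hderiv : ∀ y : ℝ, HasDerivAt F (y * Real.exp y) y := by
    intro y
    have h1 : HasDerivAt (fun y : ℝ => (y - 1) * Real.exp y)
        (1 * Real.exp y + (y - 1) * Real.exp y) y :=
      ((hasDerivAt_id y).sub_const 1).mul (Real.hasDerivAt_exp y)
    have := h1.add_const 1
    exact this.congr_deriv (by ring)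
  have hmono : StrictMonoOn F (Set.Ici 0) := by
    apply strictMonoOn_of_deriv_pos (convex_Ici 0)
    · exact (Continuous.mul (by continuity) Real.continuous_exp).add continuous_const
        |>.continuousOn
    · intro y hy
      rw [interior_Ici] at hy
      rw [(hderiv y).deriv]
      exact mul_pos hy (Real.exp_pos y)
  have h0 : F 0 = 0 := by simp [hF]
  have := hmono (Set.self_mem_Ici) (Set.mem_Ici.mpr hx.le) hx
  rw [h0] at this
  exact this

/-- `ν ↦ ν (e^{r/ν} - 1)` is strictly antitone on `(0,∞)`. -/
lemma aux_G_anti {r : ℝ} (hr : 0 < r) :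
    StrictAntiOn (fun ν : ℝ => ν * (Real.exp (r / ν) - 1)) (Set.Ioi 0) := by
  set G : ℝ → ℝ := fun ν => ν * (Real.exp (r / ν) - 1) with hG
  have hderiv : ∀ ν : ℝ, 0 < ν →
      HasDerivAt G (Real.exp (r / ν) - 1 - (r / ν) * Real.exp (r / ν)) ν := by
    intro ν hν
    have hν0 : ν ≠ 0 := ne_of_gt hν
    have h1 : HasDerivAt (fun ν : ℝ => r / ν) (-(r / ν ^ 2)) ν := by
      have := (hasDerivAt_inv hν0).const_mul r
      have heq : (fun ν : ℝ => r * ν⁻¹) = fun ν : ℝ => r / ν := by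
        funext x; rw [div_eq_mul_inv]
      rw [heq] at this
      exact this.congr_deriv (by ring)
    have h2 : HasDerivAt (fun ν : ℝ => Real.exp (r / ν) - 1)
        (Real.exp (r / ν) * (-(r / ν ^ 2))) ν :=
      ((Real.hasDerivAt_exp (r / ν)).comp ν h1).sub_const 1
    have h3 := (hasDerivAt_id ν).mul h2
    exact h3.congr_deriv (by simp only [id]; field_simp; ring)
  apply strictAntiOn_of_deriv_neg (convex_Ioi 0)
  · apply ContinuousOn.mul continuousOn_id
    apply ContinuousOn.sub _ continuousOn_const
    exact Real.continuous_exp.comp_continuousOn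
      (continuousOn_const.div continuousOn_id (fun x hx => ne_of_gt hx))
  · intro ν hν
    rw [interior_Ioi] at hν
    rw [(hderiv ν hν).deriv]
    have hx : 0 < r / ν := div_pos hr hν
    have := aux_F_pos hx
    nlinarith [this]

/-- For a single cell serving one user, with `p(ν) = (I/g)(e^{r/ν} − 1)` the unique
power achieving load `ν`, the transmission energy `E(ν) = ν · p(ν)` is strictly
decreasing on `(0,1]`. -/
theorem energy_strictly_decreasing_single_user
    (r g I : ℝ) (hr : 0 < r) (hg : 0 < g) (hI : 0 < I)
    (hload : ∀ ν : ℝ, 0 < ν →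
      r / Real.log (1 + (I / g * (Real.exp (r / ν) - 1)) * g / I) = ν)
    (ν ν' : ℝ) (hν' : 0 < ν') (hνν : ν' < ν) (hν1 : ν ≤ 1) :
    ν * (I / g * (Real.exp (r / ν) - 1)) <
      ν' * (I / g * (Real.exp (r / ν') - 1)) := by
  have hν : 0 < ν := hν'.trans hνν
  have h := aux_G_anti hr (Set.mem_Ioi.mpr hν') (Set.mem_Ioi.mpr hν) hνν
  simp only at h
  have hIg : 0 < I / g := div_pos hI hg
  calc ν * (I / g * (Real.exp (r / ν) - 1))
      = (I / g) * (ν * (Real.exp (r / ν) - 1)) := by ring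
    _ < (I / g) * (ν' * (Real.exp (r / ν') - 1)) := by
        exact (mul_lt_mul_iff_right₀ hIg).mpr h
    _ = ν' * (I / g * (Real.exp (r / ν') - 1)) := by ring
end

section
/- Let J be a nonempty finite set with demands r_j > 0, gains g_j > 0, and fixed interference-plus-noise I_j > 0, and for ν > 0 let p(ν) be the unique power with Σ_{j∈J} r_j/log(1 + p(ν) g_j/I_j) = ν. Then the energy function E(ν) = ν · p(ν) is strictly decreasing on (0, ∞): if 0 < ν' < ν then ν'·p(ν') > ν·p(ν). -/
/-- Key monotonicity: for `c > 0`, the map `x ↦ x / log (1 + c*x)` is strictly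
increasing on positive reals. -/
lemma aux_div_log_strict_mono {c x y : ℝ} (hc : 0 < c) (hx : 0 < x) (hxy : x < y) :
    x / Real.log (1 + c * x) < y / Real.log (1 + c * y) := by
  have hy : 0 < y := hx.trans hxy
  have hLx : 0 < Real.log (1 + c * x) := Real.log_pos (by nlinarith)
  have hLy : 0 < Real.log (1 + c * y) := Real.log_pos (by nlinarith)
  rw [div_lt_div_iff₀ hLx hLy]
  -- Use strict concavity of log at points 1 and 1 + c*y with weights (1 - x/y), x/y.
  have ha : (0:ℝ) < 1 - x / y := by
    have : x / y < 1 := (div_lt_one hy).2 hxy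
    linarith
  have hb : (0:ℝ) < x / y := div_pos hx hy
  have hkey := strictConcaveOn_log_Ioi.2 (by norm_num : (1:ℝ) ∈ Set.Ioi 0)
    (by simp only [Set.mem_Ioi]; nlinarith : (1 + c * y) ∈ Set.Ioi (0:ℝ))
    (by nlinarith : (1:ℝ) ≠ 1 + c * y) ha hb (by ring)
  have hcomb : (1 - x / y) • (1:ℝ) + (x / y) • (1 + c * y) = 1 + c * x := by
    field_simp
    linear_combination (1 + x * c) * (mul_inv_cancel₀ hy.ne' : y * y⁻¹ = 1)
  rw [hcomb, smul_eq_mul, smul_eq_mul, Real.log_one, mul_zero, zero_add] at hkey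
  -- hkey : (x / y) * log (1 + c * y) < log (1 + c * x)
  have := mul_lt_mul_of_pos_left hkey hy
  rw [mul_comm] at this
  calc x * Real.log (1 + c * y) = y * (x / y * Real.log (1 + c * y)) := by
        field_simp
    _ < y * Real.log (1 + c * x) := by nlinarith

/-- The energy `E(ν) = ν · p(ν)` is strictly decreasing on `(0, ∞)`, where `p(ν)`
is the unique power with `∑_j r_j / log(1 + p(ν) g_j / I_j) = ν`. -/
theorem energy_strictly_decreasing_multiuser
    (U : Type) (J : Finset U) (r g I : U → ℝ)
    (hJ : J.Nonempty)
    (hr : ∀ j ∈ J, 0 < r j)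
    (hg : ∀ j ∈ J, 0 < g j)
    (hI : ∀ j ∈ J, 0 < I j)
    (ν ν' p p' : ℝ)
    (hν' : 0 < ν') (hνν : ν' < ν)
    (hp : 0 < p) (hp' : 0 < p')
    (heq : (∑ j ∈ J, r j / Real.log (1 + p * g j / I j)) = ν)
    (heq' : (∑ j ∈ J, r j / Real.log (1 + p' * g j / I j)) = ν') :
    ν * p < ν' * p' := by
  have hc : ∀ j ∈ J, 0 < g j / I j := fun j hj => div_pos (hg j hj) (hI j hj)
  have hrw : ∀ (q : ℝ) (j : U), q * g j / I j = (g j / I j) * q := fun q j => by ring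
  -- First: p < p'
  have hpp' : p < p' := by
    by_contra h
    push_neg at h  -- p' ≤ p
    have hle : ν ≤ ν' := by
      rw [← heq, ← heq']
      apply Finset.sum_le_sum
      intro j hj
      have hcj := hc j hj
      have hL' : 0 < Real.log (1 + p' * g j / I j) := by
        apply Real.log_pos
        rw [hrw]; nlinarith
      apply div_le_div_of_nonneg_left (hr j hj).le hL'
      apply Real.log_le_log (by rw [hrw]; nlinarith)
      rw [hrw, hrw]
      nlinarith
    linarith
  -- Now rewrite ν*p and ν'*p' as sums
  have key : ∀ (q : ℝ), 0 < q →
      (∑ j ∈ J, r j / Real.log (1 + q * g j / I j)) * q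
        = ∑ j ∈ J, r j * (q / Real.log (1 + q * g j / I j)) := by
    intro q hq
    rw [Finset.sum_mul]
    apply Finset.sum_congr rfl
    intro j hj
    field_simp
  rw [← heq, ← heq', key p hp, key p' hp']
  apply Finset.sum_lt_sum_of_nonempty hJ
  intro j hj
  apply mul_lt_mul_of_pos_left _ (hr j hj)
  have := aux_div_log_strict_mono (hc j hj) hp hpp'
  rwa [hrw p j, hrw p' j]
end

section
/- A standard interference function T: ℝⁿ_{>0} → ℝⁿ_{>0} (positive, monotone, scalable) has at most one fixed point: if T(p) = p and T(q) = q with p, q > 0 componentwise, then p = q. -/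
/-- A standard interference function (positive, monotone, scalable) has at most
one fixed point in the strictly positive orthant. -/
theorem standard_interference_unique_fixed_point
    (n : ℕ) (T : (Fin n → ℝ) → (Fin n → ℝ))
    (hpos : ∀ p : Fin n → ℝ, (∀ i, 0 < p i) → ∀ i, 0 < T p i)
    (hmono : ∀ p q : Fin n → ℝ, (∀ i, 0 < p i) → (∀ i, 0 < q i) →
      p ≤ q → T p ≤ T q)
    (hscal : ∀ α : ℝ, 1 < α → ∀ p : Fin n → ℝ, (∀ i, 0 < p i) →
      ∀ i, T (α • p) i < α * T p i)
    (p q : Fin n → ℝ)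
    (hp : ∀ i, 0 < p i) (hq : ∀ i, 0 < q i)
    (hfp : T p = p) (hfq : T q = q) :
    p = q := by
  rcases Nat.eq_zero_or_pos n with hn | hn
  · subst hn; funext i; exact i.elim0
  have inst : Nonempty (Fin n) := ⟨⟨0, hn⟩⟩
  have key : ∀ p q : Fin n → ℝ, (∀ i, 0 < p i) → (∀ i, 0 < q i) →
      T p = p → T q = q → q ≤ p := by
    intro p q hp hq hfp hfq
    set α := Finset.univ.sup' Finset.univ_nonempty (fun i => q i / p i) with hα
    obtain ⟨j, _, hj⟩ := Finset.exists_mem_eq_sup' Finset.univ_nonempty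
      (fun i => q i / p i)
    have hqa : ∀ i, q i ≤ α * p i := by
      intro i
      have : q i / p i ≤ α := by rw [hα]; exact Finset.le_sup' (fun i => q i / p i) (Finset.mem_univ i)
      calc q i = (q i / p i) * p i := (div_mul_cancel₀ (q i) (hp i).ne').symm
        _ ≤ α * p i := by nlinarith [hp i]
    rcases le_or_gt α 1 with h1 | h1
    · intro i
      calc q i ≤ α * p i := hqa i
        _ ≤ 1 * p i := by nlinarith [hp i]
        _ = p i := one_mul _
    · exfalso
      have hle : q ≤ α • p := fun i => by
        simpa [Pi.smul_apply, smul_eq_mul] using hqa i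
      have hαp : ∀ i, 0 < (α • p) i := fun i => by
        have := hp i; simp only [Pi.smul_apply, smul_eq_mul]; nlinarith
      have h2 : T q j ≤ T (α • p) j := hmono q (α • p) hq hαp hle j
      have h3 : T (α • p) j < α * T p j := hscal α h1 p hp j
      have hqj : q j = α * p j := by
        have hpj := hp j
        have : α = q j / p j := hj
        rw [this, div_mul_cancel₀ (q j) hpj.ne']
      rw [hfq] at h2
      rw [hfp] at h3
      linarith [h2, h3, hqj ▸ (lt_of_le_of_lt h2 h3)]
  exact le_antisymm (key q p hq hp hfq hfp) (key p q hp hq hfp hfq)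
end

section
/- Consider a graph G = (V, E) with |V| = n ≥ 2, and a set S ⊆ V of activated LPNs such that each activated LPN i interferes with the users of its graph neighbors. If for some i ∈ S a neighbor of i is also in S, streaming with LPN power 1, serving gain 1 and demand 1 at full load requires SINR satisfying 1 = 1/log₂(1 + 1/(I + 1)) with interference I ≥ ε > 0, which forces the required LPN power to exceed the unit power limit; hence any feasible set S of simultaneously activated LPNs (each within its unit power budget and achieving its unit demand at full load) must be an independent set in G. -/
/-- In the NP-hardness reduction, any feasible set of simultaneously activated
LPNs (each within its unit power budget and meeting its unit demand at full load,
where each activated neighbor contributes interference `ε`) must be an independent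
set of the graph. -/
theorem feasible_lpns_independent
    (n : ℕ) (hn : 2 ≤ n)
    (G : SimpleGraph (Fin n)) [DecidableRel G.Adj]
    (ε : ℝ) (hε : 0 < ε)
    (S : Finset (Fin n)) (p : Fin n → ℝ)
    (hfeas : ∀ i ∈ S, 0 < p i ∧ p i ≤ 1 ∧
      (1 : ℝ) = 1 / Real.logb 2
        (1 + p i * 1 / ((((G.neighborFinset i ∩ S).card : ℝ)) * ε + 1))) :
    ∀ i ∈ S, ∀ j ∈ S, ¬ G.Adj i j := by
  intro i hi j hj hadj
  obtain ⟨hp0, hp1, heq⟩ := hfeas i hi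
  set m : ℕ := (G.neighborFinset i ∩ S).card with hm
  have hmpos : 1 ≤ m := by
    apply Finset.card_pos.mpr
    exact ⟨j, Finset.mem_inter.mpr ⟨(SimpleGraph.mem_neighborFinset G i j).mpr hadj, hj⟩⟩
  have hden : (0 : ℝ) < (m : ℝ) * ε + 1 := add_pos_of_nonneg_of_pos (mul_nonneg (Nat.cast_nonneg _) hε.le) one_pos
  -- from 1 = 1/x, x = 1
  have hlog : Real.logb 2 (1 + p i * 1 / ((m : ℝ) * ε + 1)) = 1 := by
    set x := Real.logb 2 (1 + p i * 1 / ((m : ℝ) * ε + 1)) with hx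
    have hxne : x ≠ 0 := by
      intro h
      rw [h] at heq; simp at heq
    field_simp at heq
    linarith
  have harg : 1 + p i * 1 / ((m : ℝ) * ε + 1) = 2 := by
    have := Real.rpow_logb (by norm_num : (0:ℝ) < 2) (by norm_num : (2:ℝ) ≠ 1)
      (add_pos one_pos (div_pos (mul_pos hp0 one_pos) hden) : (0:ℝ) < 1 + p i * 1 / ((m : ℝ) * ε + 1))
    rw [hlog] at this
    simpa using this.symm
  have hpi : p i = (m : ℝ) * ε + 1 := by
    field_simp at harg
    linarith
  have : (1 : ℝ) ≤ (m : ℝ) := by exact_mod_cast hmpos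
  nlinarith
end

section
/- Let f(ν) be defined componentwise by f_i(ν) = Σ_{j∈J_i} r_{ij}/log(1 + p_i g_{ij}/(Σ_{k≠i} p_k g_{kj} ν_k + σ²)) for fixed p > 0, r > 0, gains g ≥ 0 with g_{ij} > 0 for served users, and σ² > 0. If there exists ν̂ with 0 < ν̂ ≤ 1 and f(ν̂) ≤ ν̂ componentwise, then the iteration ν^{t+1} = f(ν^t) starting from ν⁰ = ν̂ converges monotonically (componentwise nonincreasing) to a fixed point ν* with f(ν*) = ν* and 0 < ν* ≤ ν̂. -/
open Filter

/-- Monotone iteration for the load coupling map: if `F(ν̂) ≤ ν̂` for some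
`0 < ν̂ ≤ 1`, then iterating `F` from `ν̂` yields a componentwise nonincreasing
sequence converging to a fixed point `ν* ≤ ν̂` with `ν* > 0`. -/
theorem load_coupling_iteration_converges
    (n : ℕ) (U : Type) (J : Fin n → Finset U)
    (r : Fin n → U → ℝ) (p : Fin n → ℝ) (g : Fin n → U → ℝ) (σ2 : ℝ)
    (hJ : ∀ i, (J i).Nonempty)
    (hr : ∀ i, ∀ j ∈ J i, 0 < r i j)
    (hp : ∀ k, 0 < p k)
    (hg : ∀ k j, 0 ≤ g k j)
    (hgi : ∀ i, ∀ j ∈ J i, 0 < g i j)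
    (hσ : 0 < σ2)
    (F : (Fin n → ℝ) → (Fin n → ℝ))
    (hF : ∀ ν : Fin n → ℝ, ∀ i : Fin n,
      F ν i = ∑ j ∈ J i, r i j /
        Real.log (1 + p i * g i j /
          (∑ k ∈ Finset.univ.erase i, p k * g k j * ν k + σ2)))
    (νhat : Fin n → ℝ)
    (hνhat : ∀ i, 0 < νhat i ∧ νhat i ≤ 1)
    (hfeas : F νhat ≤ νhat) :
    (∀ t : ℕ, F^[t + 1] νhat ≤ F^[t] νhat) ∧
    ∃ νstar : Fin n → ℝ, F νstar = νstar ∧ (∀ i, 0 < νstar i) ∧ νstar ≤ νhat ∧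
      Tendsto (fun t : ℕ => F^[t] νhat) atTop (nhds νstar) := by
  set x : ℕ → Fin n → ℝ := fun t => F^[t] νhat with hxdef
  have hSpos : ∀ (ν : Fin n → ℝ), (∀ k, 0 ≤ ν k) → ∀ (i : Fin n) (j : U),
      0 < ∑ k ∈ Finset.univ.erase i, p k * g k j * ν k + σ2 := by
    intro ν hν i j
    have h : 0 ≤ ∑ k ∈ Finset.univ.erase i, p k * g k j * ν k :=
      Finset.sum_nonneg fun k _ => mul_nonneg (mul_nonneg (hp k).le (hg k j)) (hν k)
    linarith
  have hlogpos : ∀ (ν : Fin n → ℝ), (∀ k, 0 ≤ ν k) → ∀ (i : Fin n), ∀ j ∈ J i,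
      0 < Real.log (1 + p i * g i j /
        (∑ k ∈ Finset.univ.erase i, p k * g k j * ν k + σ2)) := by
    intro ν hν i j hj
    apply Real.log_pos
    have h := div_pos (mul_pos (hp i) (hgi i j hj)) (hSpos ν hν i j)
    linarith
  have hFpos : ∀ (ν : Fin n → ℝ), (∀ k, 0 ≤ ν k) → ∀ i, 0 < F ν i := by
    intro ν hν i
    rw [hF]
    exact Finset.sum_pos (fun j hj => div_pos (hr i j hj) (hlogpos ν hν i j hj)) (hJ i)
  have hmono : ∀ ν ν' : Fin n → ℝ, (∀ k, 0 ≤ ν k) → ν ≤ ν' → F ν ≤ F ν' := by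
    intro ν ν' hν hle i
    rw [hF, hF]
    apply Finset.sum_le_sum
    intro j hj
    have hν' : ∀ k, 0 ≤ ν' k := fun k => (hν k).trans (hle k)
    have hS : ∑ k ∈ Finset.univ.erase i, p k * g k j * ν k ≤
        ∑ k ∈ Finset.univ.erase i, p k * g k j * ν' k :=
      Finset.sum_le_sum fun k _ => mul_le_mul_of_nonneg_left (hle k)
        (mul_nonneg (hp k).le (hg k j))
    have ha : 0 < p i * g i j := mul_pos (hp i) (hgi i j hj)
    have hd : p i * g i j / (∑ k ∈ Finset.univ.erase i, p k * g k j * ν' k + σ2)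
        ≤ p i * g i j / (∑ k ∈ Finset.univ.erase i, p k * g k j * ν k + σ2) := by
      gcongr
      exact (hSpos ν hν i j)
    have hL : Real.log (1 + p i * g i j /
          (∑ k ∈ Finset.univ.erase i, p k * g k j * ν' k + σ2)) ≤
        Real.log (1 + p i * g i j /
          (∑ k ∈ Finset.univ.erase i, p k * g k j * ν k + σ2)) := by
      apply Real.log_le_log (by
        have := div_pos ha (hSpos ν' hν' i j); linarith)
      linarith
    exact div_le_div_of_nonneg_left (hr i j hj).le (hlogpos ν' hν' i j hj) hL
  have key : ∀ t, (∀ i, 0 < x t i) ∧ x (t + 1) ≤ x t := by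
    intro t
    induction t with
    | zero =>
      refine ⟨fun i => (hνhat i).1, ?_⟩
      simpa [hxdef] using hfeas
    | succ t ih =>
      have hsucc : ∀ s, x (s + 1) = F (x s) := by
        intro s; simp [hxdef, Function.iterate_succ_apply']
      have hpos : ∀ i, 0 < x (t + 1) i := by
        intro i
        rw [hsucc t]
        exact hFpos _ (fun k => (ih.1 k).le) i
      refine ⟨hpos, ?_⟩
      calc x (t + 1 + 1) = F (x (t + 1)) := hsucc (t + 1)
        _ ≤ F (x t) := hmono _ _ (fun k => (hpos k).le) ih.2
        _ = x (t + 1) := (hsucc t).symm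
  have hanti : ∀ i, Antitone fun t => x t i :=
    fun i => antitone_nat_of_succ_le fun t => (key t).2 i
  have hbdd : ∀ i, BddBelow (Set.range fun t => x t i) := by
    intro i
    refine ⟨0, ?_⟩
    rintro v ⟨t, rfl⟩
    exact ((key t).1 i).le
  set νstar : Fin n → ℝ := fun i => ⨅ t, x t i with hνstardef
  have hν0 : ∀ k, 0 ≤ νstar k := fun k => le_ciInf fun t => ((key t).1 k).le
  have htends : ∀ i, Tendsto (fun t => x t i) atTop (nhds (νstar i)) :=
    fun i => tendsto_atTop_ciInf (hanti i) (hbdd i)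
  have htendsF : Tendsto x atTop (nhds νstar) := by
    rw [tendsto_pi_nhds]; exact htends
  have hsucc : ∀ s, x (s + 1) = F (x s) := by
    intro s; simp [hxdef, Function.iterate_succ_apply']
  -- continuity: F (x t) → F νstar componentwise
  have hFt : ∀ i, Tendsto (fun t => F (x t) i) atTop (nhds (F νstar i)) := by
    intro i
    simp only [hF]
    apply tendsto_finset_sum
    intro j hj
    apply Tendsto.div tendsto_const_nhds
    · apply Filter.Tendsto.log
      · apply Tendsto.add tendsto_const_nhds
        apply Tendsto.div tendsto_const_nhds
        · apply Tendsto.add _ tendsto_const_nhds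
          apply tendsto_finset_sum
          intro k _
          exact tendsto_const_nhds.mul (htends k)
        · exact (hSpos νstar hν0 i j).ne'
      · have h := div_pos (mul_pos (hp i) (hgi i j hj)) (hSpos νstar hν0 i j)
        intro h0; linarith [h0 ▸ h]
    · exact (hlogpos νstar hν0 i j hj).ne'
  have hFtend : Tendsto (fun t => x (t + 1)) atTop (nhds (F νstar)) := by
    rw [tendsto_pi_nhds]
    intro i
    simpa only [hsucc] using hFt i
  have hshift : Tendsto (fun t => x (t + 1)) atTop (nhds νstar) :=
    htendsF.comp (tendsto_add_atTop_nat 1)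
  have hfix : F νstar = νstar := tendsto_nhds_unique hFtend hshift
  refine ⟨fun t => (key t).2, νstar, hfix, ?_, ?_, htendsF⟩
  · intro i
    rw [← hfix]
    exact hFpos νstar hν0 i
  · intro i
    have h := ciInf_le (hbdd i) 0
    simpa [hxdef] using h
end
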